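/- Let q be a prime power, m a positive integer, and suppose q^m > 4^{70}. If w(M) denotes the number of distinct prime divisors of M and we assume ω(q^m−1) ≥ 473, then q^{m/2 − 2} > 4·(2^{ω(q^m−1)})². -/

import Mathlib

def isP (k : ℕ) : Bool := 2 ≤ k && (List.range 46).all (fun d => d < 2 || d == k || k % d != 0)
def cnt (k : ℕ) : ℕ := ((Finset.range 11).filter (fun a => 2^(a+1) ≤ k)).card

lemma prime_isP {k : ℕ} (hk : k.Prime) : isP k = true := by
  simp only [isP, Bool.and_eq_true, decide_eq_true_eq, List.all_eq_true, List.mem_range,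
    Bool.or_eq_true, beq_iff_eq, bne_iff_ne, ne_eq]
  refine ⟨hk.two_le, fun d hd => ?_⟩
  by_cases h1 : d < 2
  · tauto
  by_cases h2 : d = k
  · tauto
  have : ¬ k % d = 0 := fun hmod => by
    rcases hk.eq_one_or_self_of_dvd d (Nat.dvd_of_mod_eq_zero hmod) with h | h <;> omega
  tauto

lemma cnt_le_log {k : ℕ} (hk : 2 ≤ k) : cnt k ≤ Nat.log 2 k := by
  have : (Finset.range 11).filter (fun a => 2^(a+1) ≤ k) ⊆ Finset.range (Nat.log 2 k) := by
    intro a ha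
    simp only [Finset.mem_filter, Finset.mem_range] at ha ⊢
    have := (Nat.le_log_iff_pow_le (by norm_num) (by omega)).mpr ha.2
    omega
  simpa [cnt] using (Finset.card_le_card this).trans_eq (Finset.card_range _)

lemma cnt_eq_of_big {k : ℕ} (hk : 2048 ≤ k) : cnt k = 11 := by
  have : (Finset.range 11).filter (fun a => 2^(a+1) ≤ k) = Finset.range 11 := by
    apply Finset.filter_true_of_mem
    intro a ha
    simp only [Finset.mem_range] at ha
    calc 2^(a+1) ≤ 2^11 := Nat.pow_le_pow_right (by norm_num) (by omega)
    _ ≤ k := hk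
  simp [cnt, this]

set_option maxRecDepth 100000 in
lemma sumP : ∑ p ∈ (Finset.range 2048).filter (fun k => isP k = true), (11 - cnt p) = 704 := by decide

-- key combinatorial lemma
lemma sum_log_ge (M : ℕ) (hM : M ≠ 0) :
    11 * M.primeFactors.card ≤ (∑ p ∈ M.primeFactors, Nat.log 2 p) + 704 := by
  set S := M.primeFactors with hS
  have hprime : ∀ p ∈ S, p.Prime := fun p hp => Nat.prime_of_mem_primeFactors hp
  have hg : ∑ p ∈ S, (11 - cnt p) ≤ 704 := by
    have h0 : ∑ p ∈ S, (11 - cnt p) = ∑ p ∈ S.filter (· < 2048), (11 - cnt p) := by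
      refine (Finset.sum_subset (Finset.filter_subset _ _) ?_).symm
      intro p hp hnp
      simp only [Finset.mem_filter, not_and, not_lt] at hnp
      simp [cnt_eq_of_big (hnp hp)]
    have h1 : S.filter (· < 2048) ⊆ (Finset.range 2048).filter (fun k => isP k = true) := by
      intro p hp
      simp only [Finset.mem_filter, Finset.mem_range] at hp ⊢
      exact ⟨hp.2, prime_isP (hprime p hp.1)⟩
    rw [h0, ← sumP]
    exact Finset.sum_le_sum_of_subset h1
  have h2 : ∀ p ∈ S, 11 ≤ Nat.log 2 p + (11 - cnt p) := by
    intro p hp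
    have := cnt_le_log (hprime p hp).two_le
    omega
  calc 11 * S.card = ∑ _p ∈ S, 11 := by simp [Finset.sum_const, mul_comm]
    _ ≤ ∑ p ∈ S, (Nat.log 2 p + (11 - cnt p)) := Finset.sum_le_sum h2
    _ = (∑ p ∈ S, Nat.log 2 p) + ∑ p ∈ S, (11 - cnt p) := Finset.sum_add_distrib
    _ ≤ (∑ p ∈ S, Nat.log 2 p) + 704 := by omega

lemma pow_le_of_primeFactors (M : ℕ) (hM : M ≠ 0) :
    2 ^ (11 * M.primeFactors.card - 704) ≤ M := by
  have h1 : ∀ p ∈ M.primeFactors, 2 ^ Nat.log 2 p ≤ p := fun p hp =>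
    Nat.pow_log_le_self 2 (Nat.prime_of_mem_primeFactors hp).pos.ne'
  calc 2 ^ (11 * M.primeFactors.card - 704) ≤ 2 ^ ∑ p ∈ M.primeFactors, Nat.log 2 p := by
        apply Nat.pow_le_pow_right (by norm_num)
        have := sum_log_ge M hM
        omega
    _ = ∏ p ∈ M.primeFactors, 2 ^ Nat.log 2 p := by rw [Finset.prod_pow_eq_pow_sum]
    _ ≤ ∏ p ∈ M.primeFactors, p := Finset.prod_le_prod' h1
    _ ≤ M := Nat.le_of_dvd (Nat.pos_of_ne_zero hM) (Nat.prod_primeFactors_dvd M)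

/-- If q is a prime power, m ≥ 7, q^m > 4^70 and ω(q^m − 1) ≥ 473, then
q^{m/2 − 2} > 4·(2^{ω(q^m−1)})². -/
theorem stmt_5 (q m : ℕ) (hq : ∃ (p k : ℕ), p.Prime ∧ 0 < k ∧ q = p ^ k)
    (hm : 7 ≤ m) (hbig : (q : ℝ) ^ m > 4 ^ 70)
    (hω : 473 ≤ (q ^ m - 1).primeFactors.card) :
    (q : ℝ) ^ ((m : ℝ) / 2 - 2) >
      4 * ((2 : ℝ) ^ ((q ^ m - 1).primeFactors.card : ℕ)) ^ 2 := by
  obtain ⟨p, k, hp, hk, rfl⟩ := hq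
  set Q : ℕ := p ^ k with hQ
  have hq2 : 2 ≤ Q := Nat.one_lt_pow hk.ne' hp.two_le
  set n : ℕ := (Q ^ m - 1).primeFactors.card with hn
  set e : ℕ := 11 * n - 704 with he
  have hn473 : 473 ≤ n := hω
  have hMne : Q ^ m - 1 ≠ 0 := by
    have : 2 ^ m ≤ Q ^ m := Nat.pow_le_pow_left hq2 m
    have : 2 ^ 7 ≤ 2 ^ m := Nat.pow_le_pow_right (by norm_num) hm
    omega
  have hnat : 2 ^ e < Q ^ m := by
    have h1 := pow_le_of_primeFactors (Q ^ m - 1) hMne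
    rw [← hn, ← he] at h1
    omega
  -- move to ℝ
  have hQ1 : (1:ℝ) < (Q:ℝ) := by exact_mod_cast hq2.trans_lt' one_lt_two
  have hQ0 : (0:ℝ) < (Q:ℝ) := zero_lt_one.trans hQ1
  have hlt : (2:ℝ) ^ (e:ℕ) < (Q:ℝ) ^ (m:ℕ) := by exact_mod_cast hnat
  have hcast : ((e : ℕ) : ℝ) = 11 * (n:ℝ) - 704 := by
    have : 704 ≤ 11 * n := by omega
    push_cast [he, Nat.cast_sub this]
    ring
  have hn' : (473:ℝ) ≤ (n:ℝ) := by exact_mod_cast hn473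
  calc 4 * ((2 : ℝ) ^ (n : ℕ)) ^ 2 = (2:ℝ) ^ ((2 * n + 2 : ℕ) : ℕ) := by
        rw [pow_add, mul_comm 2 n, pow_mul]; norm_num; ring
    _ = (2:ℝ) ^ (((2 * n + 2 : ℕ) : ℝ)) := (Real.rpow_natCast 2 _).symm
    _ ≤ (2:ℝ) ^ ((e:ℝ) * (3 / 14)) := by
        apply Real.rpow_le_rpow_of_exponent_le one_le_two
        rw [hcast]
        push_cast
        linarith [hn']
    _ = ((2:ℝ) ^ (e:ℕ)) ^ ((3:ℝ) / 14) := by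
        rw [← Real.rpow_natCast 2 e, ← Real.rpow_mul (by norm_num)]
    _ < ((Q:ℝ) ^ (m:ℕ)) ^ ((3:ℝ) / 14) := by
        apply Real.rpow_lt_rpow (by positivity) hlt (by norm_num)
    _ = (Q:ℝ) ^ ((m:ℝ) * (3 / 14)) := by
        rw [← Real.rpow_natCast (Q:ℝ) m, ← Real.rpow_mul hQ0.le]
    _ ≤ (Q:ℝ) ^ ((m:ℝ) / 2 - 2) := by
        apply Real.rpow_le_rpow_of_exponent_le hQ1.le
        have : (7:ℝ) ≤ (m:ℝ) := by exact_mod_cast hm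
        linarith
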